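/- Let N ≥ 3 and take φ = 0 (the ordered one-dimensional XY model with Hamiltonian F_0). For every subset A ⊆ {1,…,N} of even cardinality, the configuration θ defined by θ_N = 0 and increments θ_{k+1} − θ_k = π if k ∈ A and 0 otherwise (k = 1,…,N−1, and consistently s_N = π if N ∈ A, else 0, since |A| is even) is a stationary point of F_0, with energy F_0(θ) = 2|A| and Hessian determinant det 𝓗(θ) = (−1)^{|A|} (N − 2|A|). -/

import Mathlib

open Real Filter

/-- The variable `s k = φ k + θ (k+1) - θ k` (indices cyclic mod `N`,
0-based; paper index `k` corresponds to `k-1` here, so `s_N` is `sVar` at `lastIdx`). -/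
noncomputable def sVar (N : ℕ) (hN : 0 < N) (φ θ : Fin N → ℝ) (k : Fin N) : ℝ :=
  φ k + θ ⟨((k : ℕ) + 1) % N, Nat.mod_lt _ hN⟩ - θ k

/-- The lattice Landau gauge functional / random phase XY Hamiltonian
`F_φ(θ) = Σ_k (1 - cos(φ_k + θ_{k+1} - θ_k))` with periodic boundary conditions. -/
noncomputable def Fxy (N : ℕ) (hN : 0 < N) (φ θ : Fin N → ℝ) : ℝ :=
  ∑ k : Fin N, (1 - Real.cos (sVar N hN φ θ k))

/-- The index of the fixed site (paper site `N`). -/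
def lastIdx (N : ℕ) (hN : 0 < N) : Fin N :=
  ⟨N - 1, Nat.sub_lt hN Nat.one_pos⟩

/-- `θ` is a stationary point of `F_φ` regarded as a function of the free
coordinates `θ_1, …, θ_{N-1}` (0-based: coordinates `k` with `k < N-1`),
with `θ` at `lastIdx` held fixed: all partial derivatives vanish. -/
noncomputable def IsStationaryPt (N : ℕ) (hN : 0 < N) (φ θ : Fin N → ℝ) : Prop :=
  ∀ k : Fin N, (k : ℕ) < N - 1 →
    deriv (fun t : ℝ => Fxy N hN φ (Function.update θ k t)) (θ k) = 0

/-- The `(N-1) × (N-1)` tridiagonal matrix with entries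
`δ_{ij}(c_{i-1} + c_i) - δ_{i-1,j} c_{i-1} - δ_{i+1,j} c_i`, where indices are
0-based (paper index `i` ↦ `i-1`) and `c_0 := c_N` (cyclic predecessor). -/
noncomputable def hessC (N : ℕ) (hN : 0 < N) (c : Fin N → ℝ) :
    Matrix (Fin (N - 1)) (Fin (N - 1)) ℝ :=
  Matrix.of fun i j =>
    (if i = j then
        c ⟨((i : ℕ) + (N - 1)) % N, Nat.mod_lt _ hN⟩ +
          c ⟨(i : ℕ), lt_of_lt_of_le i.isLt (Nat.sub_le N 1)⟩
      else 0)
    - (if (i : ℕ) = (j : ℕ) + 1 then c ⟨((i : ℕ) + (N - 1)) % N, Nat.mod_lt _ hN⟩ else 0)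
    - (if (j : ℕ) = (i : ℕ) + 1 then c ⟨(i : ℕ), lt_of_lt_of_le i.isLt (Nat.sub_le N 1)⟩ else 0)

/-- The Hessian of `F_φ` (with the last coordinate fixed) at a configuration `θ`. -/
noncomputable def hessAt (N : ℕ) (hN : 0 < N) (φ θ : Fin N → ℝ) :
    Matrix (Fin (N - 1)) (Fin (N - 1)) ℝ :=
  hessC N hN fun k => Real.cos (sVar N hN φ θ k)

/-- `F_φ` as a function of the free coordinates only: the coordinate at
`lastIdx` is overwritten by `0`. -/
noncomputable def FxyFixed (N : ℕ) (hN : 0 < N) (φ : Fin N → ℝ) (η : Fin N → ℝ) : ℝ :=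
  Fxy N hN φ (Function.update η (lastIdx N hN) 0)

/-- The value `σ = (Φ + 2πl - π Σ_{k=1}^{N-1} q_k) / (1 + Σ_{k=1}^{N-1} (-1)^{q_k})`. -/
noncomputable def sigmaVal (N : ℕ) (hN : 0 < N) (φ : Fin N → ℝ) (q : Fin N → ℕ) (l : ℤ) : ℝ :=
  ((∑ k, φ k) + 2 * Real.pi * (l : ℝ)
      - Real.pi * ∑ k ∈ Finset.univ.erase (lastIdx N hN), (q k : ℝ)) /
    (1 + ∑ k ∈ Finset.univ.erase (lastIdx N hN), (-1 : ℝ) ^ (q k))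


/-- auxiliary tridiagonal matrix -/
noncomputable def triM (n : ℕ) (b : ℕ → ℝ) : Matrix (Fin n) (Fin n) ℝ :=
  Matrix.of fun i j =>
    if (i : ℕ) = (j : ℕ) then b (i : ℕ) + b ((i : ℕ) + 1)
    else if (i : ℕ) = (j : ℕ) + 1 then -b (i : ℕ)
    else if (j : ℕ) = (i : ℕ) + 1 then -b (j : ℕ)
    else 0

lemma triM_sub (m : ℕ) (c : ℕ → ℝ) :
    (triM (m + 1) c).submatrix Fin.succ Fin.succ = triM m (fun i => c (i + 1)) := by
  ext i j
  simp only [triM, Matrix.submatrix_apply, Matrix.of_apply, Fin.val_succ, add_left_inj]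

theorem triM_det : ∀ (n : ℕ) (b : ℕ → ℝ), (∀ i, b i ^ 2 = 1) →
    (triM n b).det = (∏ i ∈ Finset.range (n + 1), b i) * ∑ i ∈ Finset.range (n + 1), b i
  | 0, b, hb => by
      rw [Matrix.det_fin_zero, Finset.prod_range_one, Finset.sum_range_one, ← sq, hb 0]
  | 1, b, hb => by
      rw [Matrix.det_fin_one]
      have h00 : triM 1 b 0 0 = b 0 + b 1 := by simp [triM]
      rw [h00, Finset.prod_range_succ, Finset.prod_range_one, Finset.sum_range_succ,
        Finset.sum_range_one]
      linear_combination (-(b 1)) * hb 0 + (-(b 0)) * hb 1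
  | (n + 2), b, hb => by
      have IH1 := triM_det (n + 1) (fun i => b (i + 1)) (fun i => hb (i + 1))
      have IH2 := triM_det n (fun i => b (i + 1 + 1)) (fun i => hb (i + 1 + 1))
      have h00 : triM (n + 2) b 0 0 = b 0 + b 1 := by simp [triM]
      have h01 : triM (n + 2) b 0 (Fin.succ 0) = -(b 1) := by simp [triM]
      have hz : ∀ j : Fin n, triM (n + 2) b 0 j.succ.succ = 0 := by
        intro j
        simp only [triM, Matrix.of_apply, Fin.val_succ, Fin.val_zero]
        simp only [show ¬ (0 = (j : ℕ) + 1 + 1) by omega, show ¬ (0 = (j : ℕ) + 1 + 1 + 1) by omega,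
          show ¬ ((j : ℕ) + 1 + 1 = 0 + 1) by omega, if_false]
      have hdet1 : ((triM (n + 2) b).submatrix Fin.succ (Fin.succ (0 : Fin (n + 1))).succAbove).det
          = -(b 1) * (triM n (fun i => b (i + 1 + 1))).det := by
        rw [Matrix.det_succ_column_zero, Fin.sum_univ_succ]
        have e0 : (triM (n + 2) b).submatrix Fin.succ (Fin.succ (0 : Fin (n + 1))).succAbove 0 0
            = -(b 1) := by
          simp [Matrix.submatrix_apply, Fin.succ_succAbove_zero, triM]
        have ez : ∀ i : Fin n,
            (triM (n + 2) b).submatrix Fin.succ (Fin.succ (0 : Fin (n + 1))).succAbove i.succ 0 = 0 := by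
          intro i
          simp only [Matrix.submatrix_apply, Fin.succ_succAbove_zero, triM, Matrix.of_apply,
            Fin.val_succ, Fin.val_zero]
          simp only [show ¬ ((i : ℕ) + 1 + 1 = 0) by omega, show ¬ ((i : ℕ) + 1 + 1 = 0 + 1) by omega,
            show ¬ (0 = (i : ℕ) + 1 + 1 + 1) by omega, if_false]
        have em : (((triM (n + 2) b).submatrix Fin.succ
              (Fin.succ (0 : Fin (n + 1))).succAbove).submatrix (Fin.succAbove 0) Fin.succ)
            = triM n (fun i => b (i + 1 + 1)) := by
          ext i j
          simp only [Matrix.submatrix_apply, Fin.succAbove_zero, Fin.succ_succAbove_succ, triM,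
            Matrix.of_apply, Fin.val_succ, add_left_inj]
        rw [e0, em]
        rw [Finset.sum_eq_zero (fun i _ => by rw [ez i]; ring)]
        simp
      rw [Matrix.det_succ_row_zero, Fin.sum_univ_succ, Fin.sum_univ_succ]
      rw [Finset.sum_eq_zero (fun j _ => by rw [hz j]; ring)]
      rw [h00, h01, Fin.succAbove_zero, triM_sub, hdet1, IH1, IH2]
      rw [Finset.prod_range_succ' b (n + 2), Finset.sum_range_succ' b (n + 2),
          Finset.prod_range_succ' (fun i => b (i + 1)) (n + 1),
          Finset.sum_range_succ' (fun i => b (i + 1)) (n + 1)]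
      simp only [Fin.val_zero, Fin.val_succ, pow_zero, pow_one, one_mul, add_zero, zero_add]
      linear_combination ((∏ i ∈ Finset.range (n + 1), b (i + 1 + 1)) * b 1) * hb 1
        - ((∏ i ∈ Finset.range (n + 1), b (i + 1 + 1)) * b 1) * hb 0


lemma sVar_eq (N : ℕ) (hN : 0 < N) (φ θ : Fin N → ℝ) (j : Fin N) :
    sVar N hN φ θ j = φ j + θ ⟨((j : ℕ) + 1) % N, Nat.mod_lt _ hN⟩ - θ j := rfl

lemma hessC_eq_triM (N : ℕ) (hN0 : 0 < N) (c : Fin N → ℝ) :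
    hessC N hN0 c = Matrix.of fun i j : Fin (N - 1) =>
      triM (N - 1) (fun i => c ⟨(i + (N - 1)) % N, Nat.mod_lt _ hN0⟩) i j := by
  ext i j
  have hi : (i : ℕ) < N - 1 := i.isLt
  have hj : (j : ℕ) < N - 1 := j.isLt
  have hv : ∀ (m : ℕ) (hm : m < N - 1),
      (⟨(m + 1 + (N - 1)) % N, Nat.mod_lt _ hN0⟩ : Fin N)
        = ⟨m, lt_of_lt_of_le hm (Nat.sub_le N 1)⟩ := by
    intro m hm
    apply Fin.ext
    show (m + 1 + (N - 1)) % N = m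
    have h1 : m + 1 + (N - 1) = m + N := by omega
    rw [h1, Nat.add_mod_right, Nat.mod_eq_of_lt (by omega)]
  simp only [hessC, triM, Matrix.of_apply]
  by_cases h1 : i = j
  · subst h1
    rw [if_pos rfl, if_pos rfl, if_neg (by omega), if_neg (by omega)]
    rw [hv (i : ℕ) hi]
    ring
  · have h1' : (i : ℕ) ≠ (j : ℕ) := fun h => h1 (Fin.ext h)
    rw [if_neg h1, if_neg h1']
    by_cases h2 : (i : ℕ) = (j : ℕ) + 1
    · rw [if_pos h2, if_pos h2, if_neg (by omega)]
      ring
    · rw [if_neg h2, if_neg h2]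
      by_cases h3 : (j : ℕ) = (i : ℕ) + 1
      · have hx : (⟨((j : ℕ) + (N - 1)) % N, Nat.mod_lt _ hN0⟩ : Fin N)
            = ⟨(i : ℕ), by omega⟩ := by
          apply Fin.ext
          show ((j : ℕ) + (N - 1)) % N = (i : ℕ)
          have h4 : (j : ℕ) + (N - 1) = (i : ℕ) + N := by omega
          rw [h4, Nat.add_mod_right, Nat.mod_eq_of_lt (by omega)]
        rw [if_pos h3, if_pos h3, hx]
        ring
      · rw [if_neg h3, if_neg h3]
        ring

lemma hessC_det (N : ℕ) (hN0 : 0 < N) (c : Fin N → ℝ) (hc : ∀ k, c k ^ 2 = 1) :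
    (hessC N hN0 c).det = (∏ k, c k) * ∑ k, c k := by
  haveI : NeZero N := ⟨hN0.ne'⟩
  have hb : ∀ i : ℕ, (fun i => c ⟨(i + (N - 1)) % N, Nat.mod_lt _ hN0⟩) i ^ 2 = 1 :=
    fun i => hc _
  rw [hessC_eq_triM]
  have : (Matrix.of fun i j : Fin (N - 1) =>
      triM (N - 1) (fun i => c ⟨(i + (N - 1)) % N, Nat.mod_lt _ hN0⟩) i j)
      = triM (N - 1) (fun i => c ⟨(i + (N - 1)) % N, Nat.mod_lt _ hN0⟩) := rfl
  rw [this, triM_det _ _ hb]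
  have h1 : N - 1 + 1 = N := by omega
  rw [h1]
  rw [← Fin.prod_univ_eq_prod_range, ← Fin.sum_univ_eq_sum_range]
  set δ : Fin N := ⟨N - 1, by omega⟩ with hδ
  have he : ∀ i : Fin N, (⟨((i : ℕ) + (N - 1)) % N, Nat.mod_lt _ hN0⟩ : Fin N) = i + δ := by
    intro i
    apply Fin.ext
    rw [Fin.val_add]
  simp only [he]
  have hp : ∏ i : Fin N, c (i + δ) = ∏ i, c i := Equiv.prod_comp (Equiv.addRight δ) c
  have hs : ∑ i : Fin N, c (i + δ) = ∑ i, c i := Equiv.sum_comp (Equiv.addRight δ) c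
  rw [hp, hs]

lemma stationary_of_sin_zero (N : ℕ) (hN0 : 0 < N) (hN : 2 < N) (θ : Fin N → ℝ)
    (hsin : ∀ j : Fin N, Real.sin (sVar N hN0 (fun _ => 0) θ j) = 0) :
    IsStationaryPt N hN0 (fun _ => 0) θ := by
  intro k hk
  have hfun : (fun t : ℝ => Fxy N hN0 (fun _ => 0) (Function.update θ k t))
      = fun t => ∑ j : Fin N, (1 - Real.cos
          (Function.update θ k t ⟨((j : ℕ) + 1) % N, Nat.mod_lt _ hN0⟩
            - Function.update θ k t j)) := by
    funext t
    unfold Fxy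
    refine Finset.sum_congr rfl fun j _ => ?_
    rw [sVar_eq, zero_add]
  rw [hfun]
  have hsv : ∀ j : Fin N,
      Real.sin (θ ⟨((j : ℕ) + 1) % N, Nat.mod_lt _ hN0⟩ - θ j) = 0 := by
    intro j
    have h := hsin j
    rwa [sVar_eq, zero_add] at h
  have H : HasDerivAt (fun t => ∑ j : Fin N, (1 - Real.cos
      (Function.update θ k t ⟨((j : ℕ) + 1) % N, Nat.mod_lt _ hN0⟩
        - Function.update θ k t j))) (∑ _j : Fin N, (0 : ℝ)) (θ k) := by
    apply HasDerivAt.fun_sum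
    intro j _
    by_cases hjk : j = k
    · subst hjk
      have hnk : (⟨((j : ℕ) + 1) % N, Nat.mod_lt _ hN0⟩ : Fin N) ≠ j := by
        intro h
        have hv := congrArg Fin.val h
        simp only [Nat.mod_eq_of_lt (show (j : ℕ) + 1 < N by omega)] at hv
        omega
      have e : (fun t : ℝ => 1 - Real.cos
          (Function.update θ j t ⟨((j : ℕ) + 1) % N, Nat.mod_lt _ hN0⟩
            - Function.update θ j t j))
          = fun t => 1 - Real.cos (θ ⟨((j : ℕ) + 1) % N, Nat.mod_lt _ hN0⟩ - t) := by
        funext t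
        rw [Function.update_self, Function.update_of_ne hnk]
      rw [e]
      have h1 : HasDerivAt (fun t : ℝ => θ ⟨((j : ℕ) + 1) % N, Nat.mod_lt _ hN0⟩ - t)
          (-1) (θ j) := by
        simpa using (hasDerivAt_id (θ j)).const_sub (θ ⟨((j : ℕ) + 1) % N, Nat.mod_lt _ hN0⟩)
      have h2 := (h1.cos).const_sub 1
      convert h2 using 1
      rw [hsv j]
      ring
    · by_cases hnj : (⟨((j : ℕ) + 1) % N, Nat.mod_lt _ hN0⟩ : Fin N) = k
      · have e : (fun t : ℝ => 1 - Real.cos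
            (Function.update θ k t ⟨((j : ℕ) + 1) % N, Nat.mod_lt _ hN0⟩
              - Function.update θ k t j))
            = fun t => 1 - Real.cos (t - θ j) := by
          funext t
          rw [hnj, Function.update_self, Function.update_of_ne hjk]
        rw [e]
        have h1 : HasDerivAt (fun t : ℝ => t - θ j) 1 (θ k) := by
          simpa using (hasDerivAt_id (θ k)).sub_const (θ j)
        have h2 := (h1.cos).const_sub 1
        convert h2 using 1
        have h3 := hsv j
        rw [hnj] at h3
        rw [h3]
        ring
      · have e : (fun t : ℝ => 1 - Real.cos
            (Function.update θ k t ⟨((j : ℕ) + 1) % N, Nat.mod_lt _ hN0⟩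
              - Function.update θ k t j))
            = fun _ => 1 - Real.cos (θ ⟨((j : ℕ) + 1) % N, Nat.mod_lt _ hN0⟩ - θ j) := by
          funext t
          rw [Function.update_of_ne hnj, Function.update_of_ne hjk]
        rw [e]
        exact hasDerivAt_const _ _
  have := H.deriv
  rw [this, Finset.sum_const, smul_zero]

lemma theta_val (N : ℕ) (hN0 : 0 < N) (A : Finset (Fin N)) (θ : Fin N → ℝ)
    (hinc : ∀ k : Fin N, (k : ℕ) < N - 1 →
      θ ⟨((k : ℕ) + 1) % N, Nat.mod_lt _ hN0⟩ - θ k = if k ∈ A then π else 0) :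
    ∀ m (hm : m < N), θ ⟨m, hm⟩ = θ ⟨0, hN0⟩
      + π * ((A.filter (fun x : Fin N => (x : ℕ) < m)).card : ℝ) := by
  intro m
  induction m with
  | zero =>
    intro hm
    simp [Finset.filter_false]
  | succ m ih =>
    intro hm
    have hm' : m < N := by omega
    have hmN : m < N - 1 := by omega
    have h := hinc ⟨m, hm'⟩ hmN
    have hmod : (⟨(m + 1) % N, Nat.mod_lt _ hN0⟩ : Fin N) = ⟨m + 1, hm⟩ :=
      Fin.ext (Nat.mod_eq_of_lt hm)
    rw [hmod] at h
    have hfil : A.filter (fun x : Fin N => (x : ℕ) < m + 1)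
        = if (⟨m, hm'⟩ : Fin N) ∈ A then insert ⟨m, hm'⟩ (A.filter (fun x : Fin N => (x : ℕ) < m))
          else A.filter (fun x : Fin N => (x : ℕ) < m) := by
      split_ifs with hmem
      · ext x
        simp only [Finset.mem_filter, Finset.mem_insert]
        constructor
        · rintro ⟨hxA, hx⟩
          rcases Nat.lt_succ_iff_lt_or_eq.mp hx with h' | h'
          · exact Or.inr ⟨hxA, h'⟩
          · exact Or.inl (Fin.ext h')
        · rintro (h' | ⟨hxA, hx⟩)
          · refine ⟨h' ▸ hmem, ?_⟩
            rw [h']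
            exact Nat.lt_succ_self m
          · exact ⟨hxA, by omega⟩
      · ext x
        simp only [Finset.mem_filter]
        constructor
        · rintro ⟨hxA, hx⟩
          refine ⟨hxA, ?_⟩
          rcases Nat.lt_succ_iff_lt_or_eq.mp hx with h' | h'
          · exact h'
          · exact absurd ((Fin.ext h' : x = ⟨m, hm'⟩) ▸ hxA) hmem
        · rintro ⟨hxA, hx⟩
          exact ⟨hxA, by omega⟩
    have hθ : θ ⟨m + 1, hm⟩ = θ ⟨m, hm'⟩ + (if (⟨m, hm'⟩ : Fin N) ∈ A then π else 0) := by
      rw [← h]; ring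
    rw [hθ, ih hm', hfil]
    split_ifs with hmem
    · rw [Finset.card_insert_of_notMem (by simp [Finset.mem_filter])]
      push_cast
      ring
    · ring

/-- for the ordered XY model (`φ = 0`) and any subset `A` of the
sites with even cardinality, the configuration with `θ_N = 0` and increments
`θ_{k+1} - θ_k = π` for `k ∈ A` and `0` otherwise (`k = 1, …, N-1`; consistently
`s_N ≡ π` if `N ∈ A` and `s_N ≡ 0` otherwise, mod `2π`) is a stationary point of
`F_0` with energy `F_0(θ) = 2|A|` and Hessian determinant
`det 𝓗(θ) = (-1)^{|A|} (N - 2|A|)`. -/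
theorem stmt14 (N : ℕ) (hN : 3 ≤ N) (A : Finset (Fin N)) (hA : Even A.card)
    (θ : Fin N → ℝ) (hlast : θ (lastIdx N (by omega)) = 0)
    (hinc : ∀ k : Fin N, (k : ℕ) < N - 1 →
      θ ⟨((k : ℕ) + 1) % N, Nat.mod_lt _ (by omega)⟩ - θ k = if k ∈ A then π else 0) :
    IsStationaryPt N (by omega) (fun _ => 0) θ ∧
    (∃ m : ℤ, sVar N (by omega) (fun _ => 0) θ (lastIdx N (by omega)) =
      (if lastIdx N (by omega) ∈ A then π else 0) + 2 * π * m) ∧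
    Fxy N (by omega) (fun _ => 0) θ = 2 * A.card ∧
    (hessAt N (by omega) (fun _ => 0) θ).det = (-1 : ℝ) ^ A.card * ((N : ℝ) - 2 * A.card) := by
  have hN0 : 0 < N := by omega
  have hNe : (2 : ℕ) < N := by omega
  classical
  set ε : Fin N → ℝ := (fun k => if k ∈ A then -1 else 1) with hε
  have htv := theta_val N hN0 A θ hinc
  set aN := (A.filter (fun x : Fin N => (x : ℕ) < N - 1)).card with haN
  have h0 : (0 : ℝ) = θ ⟨0, hN0⟩ + π * aN :=
    (show (0 : ℝ) = θ ⟨N - 1, Nat.sub_lt hN0 one_pos⟩ from hlast.symm).trans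
      (htv (N - 1) (Nat.sub_lt hN0 one_pos))
  have hθ0 : θ ⟨0, hN0⟩ = -(π * aN) := by linarith [h0]
  have hslast : sVar N hN0 (fun _ => 0) θ (lastIdx N hN0) = -(π * aN) := by
    rw [sVar_eq, zero_add]
    have h1 : (⟨(((lastIdx N hN0 : Fin N) : ℕ) + 1) % N, Nat.mod_lt _ hN0⟩ : Fin N)
        = ⟨0, hN0⟩ := by
      apply Fin.ext
      show ((N - 1) + 1) % N = 0
      have h2 : N - 1 + 1 = N := by omega
      rw [h2, Nat.mod_self]
    rw [h1, hθ0, show θ (lastIdx N hN0) = 0 from hlast]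
    ring
  have hsplit : A.card = aN + (if lastIdx N hN0 ∈ A then 1 else 0) := by
    have hfe : A.filter (fun x : Fin N => (x : ℕ) < N - 1) = A.erase (lastIdx N hN0) := by
      ext x
      simp only [Finset.mem_filter, Finset.mem_erase]
      constructor
      · rintro ⟨hx, hlt⟩
        refine ⟨fun h => ?_, hx⟩
        rw [h] at hlt
        have h3 : ((lastIdx N hN0 : Fin N) : ℕ) = N - 1 := rfl
        omega
      · rintro ⟨hne, hx⟩
        refine ⟨hx, ?_⟩
        have h4 := x.isLt
        rcases Nat.lt_or_ge (x : ℕ) (N - 1) with h | h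
        · exact h
        · exact absurd (Fin.ext (by omega : (x : ℕ) = N - 1) : x = lastIdx N hN0) hne
    rw [haN, hfe]
    split_ifs with hmem
    · have := Finset.card_pos.mpr ⟨_, hmem⟩
      rw [Finset.card_erase_of_mem hmem]
      omega
    · rw [Finset.erase_eq_of_notMem hmem, Nat.add_zero]
  have hs_free : ∀ k : Fin N, (k : ℕ) < N - 1 →
      sVar N hN0 (fun _ => 0) θ k = if k ∈ A then π else 0 := by
    intro k hk
    rw [sVar_eq, zero_add]
    exact hinc k hk
  have hk_last : ∀ k : Fin N, ¬((k : ℕ) < N - 1) → k = lastIdx N hN0 := by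
    intro k hk
    apply Fin.ext
    have := k.isLt
    show (k : ℕ) = N - 1
    omega
  have hsin : ∀ j : Fin N, Real.sin (sVar N hN0 (fun _ => 0) θ j) = 0 := by
    intro j
    by_cases hj : (j : ℕ) < N - 1
    · rw [hs_free j hj]
      split_ifs
      exacts [Real.sin_pi, Real.sin_zero]
    · rw [hk_last j hj, hslast]
      rw [show -(π * (aN : ℝ)) = ((-(aN : ℤ) : ℤ) : ℝ) * π by push_cast; ring]
      exact Real.sin_int_mul_pi _
  have hparity : (-1 : ℝ) ^ aN = ε (lastIdx N hN0) := by
    by_cases hmem : lastIdx N hN0 ∈ A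
    · have h5 : aN + 1 = A.card := by rw [hsplit]; simp [hmem]
      have hodd : Odd aN := by
        rcases hA with ⟨c, hc⟩
        exact Nat.odd_iff.mpr (by omega)
      rw [hodd.neg_one_pow]
      simp [hε, hmem]
    · have h5 : aN = A.card := by rw [hsplit]; simp [hmem]
      have heven : Even aN := h5 ▸ hA
      rw [heven.neg_one_pow]
      simp [hε, hmem]
  have hcos : ∀ j : Fin N, Real.cos (sVar N hN0 (fun _ => 0) θ j) = ε j := by
    intro j
    by_cases hj : (j : ℕ) < N - 1
    · rw [hs_free j hj]
      by_cases h : j ∈ A <;> simp [hε, h]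
    · rw [hk_last j hj, hslast]
      rw [show -(π * (aN : ℝ)) = -((aN : ℝ) * π) by ring, Real.cos_neg]
      have h6 := Real.cos_nat_mul_pi_sub 0 aN
      rw [sub_zero, Real.cos_zero, mul_one] at h6
      rw [h6, hparity]
  have hsum : ∑ k : Fin N, ε k = (N : ℝ) - 2 * A.card := by
    have h7 : ∀ k : Fin N, ε k = 1 - 2 * (if k ∈ A then (1 : ℝ) else 0) := by
      intro k
      by_cases h : k ∈ A <;> simp [hε, h] <;> ring
    rw [Finset.sum_congr rfl fun k _ => h7 k, Finset.sum_sub_distrib, ← Finset.mul_sum,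
      Finset.sum_ite_mem, Finset.univ_inter, Finset.sum_const, Finset.sum_const,
      Finset.card_univ, Fintype.card_fin]
    simp [nsmul_eq_mul]
  have hprod : ∏ k : Fin N, ε k = (-1 : ℝ) ^ A.card := by
    rw [show (∏ k : Fin N, ε k) = ∏ k : Fin N, (if k ∈ A then (-1 : ℝ) else 1) from rfl,
      Finset.prod_ite_mem, Finset.univ_inter, Finset.prod_const]
  refine ⟨?_, ?_, ?_, ?_⟩
  · exact stationary_of_sin_zero N hN0 hNe θ hsin
  · show ∃ m : ℤ, sVar N hN0 (fun _ => 0) θ (lastIdx N hN0)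
      = (if lastIdx N hN0 ∈ A then π else 0) + 2 * π * m
    by_cases hmem : lastIdx N hN0 ∈ A
    · have h5 : aN + 1 = A.card := by rw [hsplit]; simp [hmem]
      have hodd : aN % 2 = 1 := by
        rcases hA with ⟨c, hc⟩
        omega
      obtain ⟨d, hd⟩ : ∃ d, aN = 2 * d + 1 := ⟨aN / 2, by omega⟩
      refine ⟨-((d : ℤ) + 1), ?_⟩
      rw [hslast, if_pos hmem, hd]
      push_cast
      ring
    · have h5 : aN = A.card := by rw [hsplit]; simp [hmem]
      have heven : aN % 2 = 0 := by
        rcases hA with ⟨c, hc⟩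
        omega
      obtain ⟨d, hd⟩ : ∃ d, aN = 2 * d := ⟨aN / 2, by omega⟩
      refine ⟨-(d : ℤ), ?_⟩
      rw [hslast, if_neg hmem, hd]
      push_cast
      ring
  · show Fxy N hN0 (fun _ => 0) θ = 2 * A.card
    unfold Fxy
    calc ∑ k : Fin N, (1 - Real.cos (sVar N hN0 (fun _ => 0) θ k))
        = ∑ k : Fin N, (1 - ε k) := Finset.sum_congr rfl fun k _ => by rw [hcos k]
      _ = (N : ℝ) - ((N : ℝ) - 2 * A.card) := by
          rw [Finset.sum_sub_distrib, Finset.sum_const, hsum, Finset.card_univ,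
            Fintype.card_fin]
          simp [nsmul_eq_mul]
      _ = 2 * A.card := by ring
  · show (hessAt N hN0 (fun _ => 0) θ).det = (-1 : ℝ) ^ A.card * ((N : ℝ) - 2 * A.card)
    have hfn : (fun k => Real.cos (sVar N hN0 (fun _ => 0) θ k)) = ε := funext hcos
    unfold hessAt
    rw [hfn, hessC_det N hN0 ε (fun k => by by_cases h : k ∈ A <;> simp [hε, h]),
      hprod, hsum]
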